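/- Let 0 < b₁ ≤ b₂ ≤ b₃ be real numbers and define f(x) = 6·Real.arcsin(1/(2·Real.cosh(x/2))) + 2·∑_{i=1}^{2} Real.arcsin(Real.cosh(b_i/2)/Real.cosh(x/2)) and g(x) = 2·Real.arccos(Real.tanh(b₃/2)/Real.tanh x) + 2·Real.arcsin(Real.sinh(b₃/2)/Real.sinh x) + 2·∑_{i=1}^{2} Real.arcsin(Real.cosh(b_i/2)/Real.cosh(x/2)). If f(b₃) ≤ π, then there exists a unique x ∈ (b₂, b₃] with g(x) = π. -/

import Mathlib

open Real

lemma my_tanh_eq (x : ℝ) : Real.tanh x = Real.sinh x / Real.cosh x :=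
  Real.tanh_eq_sinh_div_cosh x

lemma my_tanh_pos {x : ℝ} (hx : 0 < x) : 0 < Real.tanh x := by
  rw [my_tanh_eq]; exact div_pos (by rwa [Real.sinh_pos_iff]) (Real.cosh_pos x)

lemma my_tanh_lt {x y : ℝ} (hx : 0 < x) (h : x < y) : Real.tanh x < Real.tanh y := by
  have hd : Real.tanh y - Real.tanh x
      = Real.sinh (y - x) / (Real.cosh x * Real.cosh y) := by
    rw [my_tanh_eq, my_tanh_eq,
      div_sub_div _ _ (ne_of_gt (Real.cosh_pos y)) (ne_of_gt (Real.cosh_pos x)),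
      Real.sinh_sub, mul_comm (Real.cosh y) (Real.cosh x)]

  have h1 : 0 < Real.sinh (y - x) := by rwa [Real.sinh_pos_iff, sub_pos]
  have h2 : 0 < Real.cosh x * Real.cosh y := mul_pos (Real.cosh_pos x) (Real.cosh_pos y)
  nlinarith [div_pos h1 h2]

lemma my_cosT {c x : ℝ} (hc : 0 < c) (hcx : c ≤ x) :
    Real.cos (Real.arccos (Real.tanh c / Real.tanh x) + Real.arcsin (Real.sinh c / Real.sinh x))
      = Real.sinh c * Real.sqrt (Real.cosh x ^ 2 - Real.cosh c ^ 2)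
        / (Real.cosh c * (Real.cosh x + 1)) := by
  have hx : 0 < x := lt_of_lt_of_le hc hcx
  have hsx : 0 < Real.sinh x := by rwa [Real.sinh_pos_iff]
  have hsc : 0 < Real.sinh c := by rwa [Real.sinh_pos_iff]
  have htx : 0 < Real.tanh x := my_tanh_pos hx
  have htc : 0 < Real.tanh c := my_tanh_pos hc
  have htle : Real.tanh c ≤ Real.tanh x := by
    rcases eq_or_lt_of_le hcx with rfl | h
    · exact le_refl _
    · exact (my_tanh_lt hc h).le
  have hsle : Real.sinh c ≤ Real.sinh x := by rwa [Real.sinh_le_sinh]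
  have hr1 : Real.tanh c / Real.tanh x ≤ 1 := (div_le_one htx).2 htle
  have hr1' : (-1 : ℝ) ≤ Real.tanh c / Real.tanh x := by
    have := (div_pos htc htx).le; linarith
  have hr2 : Real.sinh c / Real.sinh x ≤ 1 := (div_le_one hsx).2 hsle
  have hr2' : (-1 : ℝ) ≤ Real.sinh c / Real.sinh x := by
    have := (div_pos hsc hsx).le; linarith
  have hS : 0 ≤ Real.cosh x ^ 2 - Real.cosh c ^ 2 := by
    have : Real.cosh c ≤ Real.cosh x := by
      rw [Real.cosh_le_cosh, abs_of_pos hc, abs_of_pos hx]; exact hcx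
    nlinarith [Real.cosh_pos c]
  have hA : Real.cosh c ^ 2 = Real.sinh c ^ 2 + 1 := Real.cosh_sq c
  have hC : Real.cosh x ^ 2 = Real.sinh x ^ 2 + 1 := Real.cosh_sq x
  have K : Real.sinh x ^ 2 * Real.cosh c ^ 2 - Real.sinh c ^ 2 * Real.cosh x ^ 2
      = Real.cosh x ^ 2 - Real.cosh c ^ 2 := by
    linear_combination (Real.sinh x ^ 2 + 1) * hA - (Real.sinh c ^ 2 + 1) * hC
  set S := Real.cosh x ^ 2 - Real.cosh c ^ 2 with hSdef
  have e2 : 1 - (Real.sinh c / Real.sinh x) ^ 2 = S / Real.sinh x ^ 2 := by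
    rw [hSdef]
    field_simp
    linear_combination hA - hC
  have e1 : 1 - (Real.tanh c / Real.tanh x) ^ 2 = S / (Real.cosh c ^ 2 * Real.sinh x ^ 2) := by
    rw [hSdef, my_tanh_eq, my_tanh_eq]
    field_simp
    linear_combination (Real.sinh x ^ 2 + 1) * hA - (Real.sinh c ^ 2 + 1) * hC
  have s2 : Real.sqrt (1 - (Real.sinh c / Real.sinh x) ^ 2) = Real.sqrt S / Real.sinh x := by
    rw [e2, Real.sqrt_div hS, Real.sqrt_sq hsx.le]
  have s1 : Real.sqrt (1 - (Real.tanh c / Real.tanh x) ^ 2)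
      = Real.sqrt S / (Real.cosh c * Real.sinh x) := by
    rw [e1, Real.sqrt_div hS, ← mul_pow, Real.sqrt_sq (by positivity)]
  rw [Real.cos_add, Real.cos_arccos hr1' hr1, Real.cos_arcsin, Real.sin_arccos,
    Real.sin_arcsin hr2' hr2, s1, s2, my_tanh_eq, my_tanh_eq]
  have hsinh2 : Real.sinh x ^ 2 = (Real.cosh x - 1) * (Real.cosh x + 1) := by
    nlinarith [Real.cosh_sq x]
  have hchx1 : (0:ℝ) < Real.cosh x + 1 := by positivity
  have hchx1' : Real.cosh x - 1 > 0 := by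
    have := Real.one_lt_cosh.2 (ne_of_gt hx)
    linarith
  field_simp
  linear_combination (-Real.sqrt S) * hsinh2

lemma my_Tmem {c x : ℝ} (hc : 0 < c) (hx : 0 < x) :
    Real.arccos (Real.tanh c / Real.tanh x) + Real.arcsin (Real.sinh c / Real.sinh x)
      ∈ Set.Icc 0 Real.pi := by
  have h1 : (0:ℝ) ≤ Real.tanh c / Real.tanh x := (div_pos (my_tanh_pos hc) (my_tanh_pos hx)).le
  have h2 : (0:ℝ) ≤ Real.sinh c / Real.sinh x :=
    (div_pos (by rwa [Real.sinh_pos_iff]) (by rwa [Real.sinh_pos_iff])).le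
  constructor
  · have := Real.arccos_nonneg (Real.tanh c / Real.tanh x)
    have := Real.arcsin_nonneg.2 h2
    linarith
  · have := Real.arccos_le_pi_div_two.2 h1
    have := Real.arcsin_le_pi_div_two (Real.sinh c / Real.sinh x)
    linarith

lemma my_TstrictAnti {c : ℝ} (hc : 0 < c) :
    StrictAntiOn (fun x => Real.arccos (Real.tanh c / Real.tanh x)
      + Real.arcsin (Real.sinh c / Real.sinh x)) (Set.Ici c) := by
  intro x hx y hy hxy
  simp only [Set.mem_Ici] at hx hy
  have hx0 : 0 < x := lt_of_lt_of_le hc hx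
  have hy0 : 0 < y := lt_of_lt_of_le hc hy
  -- compare the ψ values
  have hk : (1:ℝ) ≤ Real.cosh c := Real.one_le_cosh c
  have hku : Real.cosh c ≤ Real.cosh x := by
    rw [Real.cosh_le_cosh, abs_of_pos hc, abs_of_pos hx0]; exact hx
  have huv : Real.cosh x < Real.cosh y := by
    rw [Real.cosh_lt_cosh, abs_of_pos hx0, abs_of_pos hy0]; exact hxy
  set k := Real.cosh c
  set u := Real.cosh x
  set v := Real.cosh y
  have hsq : Real.sqrt (u ^ 2 - k ^ 2) * (v + 1) < Real.sqrt (v ^ 2 - k ^ 2) * (u + 1) := by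
    have hSu : (0:ℝ) ≤ u ^ 2 - k ^ 2 := by nlinarith
    have hSv : (0:ℝ) ≤ v ^ 2 - k ^ 2 := by nlinarith
    have h1 : (Real.sqrt (u ^ 2 - k ^ 2) * (v + 1)) ^ 2
        < (Real.sqrt (v ^ 2 - k ^ 2) * (u + 1)) ^ 2 := by
      rw [mul_pow, mul_pow, Real.sq_sqrt hSu, Real.sq_sqrt hSv]
      nlinarith [mul_pos (sub_pos.2 huv)
        (show (0:ℝ) < 2*u*v + u + v + k^2*(u+v) + 2*k^2 by nlinarith)]
    have h2 : 0 ≤ Real.sqrt (v ^ 2 - k ^ 2) * (u + 1) := by positivity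
    exact lt_of_pow_lt_pow_left₀ 2 h2 h1
  have hψ : Real.sinh c * Real.sqrt (u ^ 2 - k ^ 2) / (k * (u + 1))
      < Real.sinh c * Real.sqrt (v ^ 2 - k ^ 2) / (k * (v + 1)) := by
    have hsc : 0 < Real.sinh c := by rwa [Real.sinh_pos_iff]
    rw [div_lt_div_iff₀ (by positivity) (by positivity)]
    have hk0 : (0:ℝ) < k := by linarith
    nlinarith [hsq, mul_pos hsc hk0]
  have ex := my_cosT hc hx
  have ey := my_cosT hc hy
  have hmx := my_Tmem hc hx0 (c := c)
  have hmy := my_Tmem hc hy0 (c := c)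
  calc Real.arccos (Real.tanh c / Real.tanh y) + Real.arcsin (Real.sinh c / Real.sinh y)
      = Real.arccos (Real.cos (Real.arccos (Real.tanh c / Real.tanh y)
          + Real.arcsin (Real.sinh c / Real.sinh y))) :=
        (Real.arccos_cos hmy.1 hmy.2).symm
    _ < Real.arccos (Real.cos (Real.arccos (Real.tanh c / Real.tanh x)
          + Real.arcsin (Real.sinh c / Real.sinh x))) := by
        rw [ex, ey]
        have hsc : (0:ℝ) ≤ Real.sinh c := (Real.sinh_pos_iff.2 hc).le
        have m1 : (0:ℝ) ≤ Real.sinh c * Real.sqrt (Real.cosh x ^ 2 - Real.cosh c ^ 2)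
            / (Real.cosh c * (Real.cosh x + 1)) :=
          div_nonneg (mul_nonneg hsc (Real.sqrt_nonneg _)) (by positivity)
        have m2 : (0:ℝ) ≤ Real.sinh c * Real.sqrt (Real.cosh y ^ 2 - Real.cosh c ^ 2)
            / (Real.cosh c * (Real.cosh y + 1)) :=
          div_nonneg (mul_nonneg hsc (Real.sqrt_nonneg _)) (by positivity)
        exact Real.strictAntiOn_arccos
          ⟨by linarith, by rw [← ex]; exact Real.cos_le_one _⟩
          ⟨by linarith, by rw [← ey]; exact Real.cos_le_one _⟩ hψ
    _ = _ := Real.arccos_cos hmx.1 hmx.2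

lemma my_Tconst {c x : ℝ} (hx : 0 < x) (hxc : x ≤ c) :
    Real.arccos (Real.tanh c / Real.tanh x) + Real.arcsin (Real.sinh c / Real.sinh x)
      = Real.pi / 2 := by
  have hc : 0 < c := lt_of_lt_of_le hx hxc
  have h1 : (1:ℝ) ≤ Real.tanh c / Real.tanh x := by
    rw [one_le_div (my_tanh_pos hx)]
    rcases eq_or_lt_of_le hxc with rfl | h
    · exact le_refl _
    · exact (my_tanh_lt hx h).le
  have h2 : (1:ℝ) ≤ Real.sinh c / Real.sinh x := by
    rw [one_le_div (by rwa [Real.sinh_pos_iff])]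
    rwa [Real.sinh_le_sinh]
  rw [Real.arccos_eq_zero.2 h1, Real.arcsin_of_one_le h2, zero_add]

lemma my_identity {c : ℝ} (hc : 0 < c) :
    Real.arccos (Real.tanh c / Real.tanh (2 * c)) = 2 * Real.arcsin (1 / (2 * Real.cosh c)) := by
  have hk : (1:ℝ) ≤ Real.cosh c := Real.one_le_cosh c
  set s : ℝ := 1 / (2 * Real.cosh c) with hs
  have hs0 : 0 < s := by rw [hs]; positivity
  have hs1 : s ≤ 1 / 2 := by
    rw [hs, div_le_div_iff₀ (by positivity) (by norm_num)]
    linarith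
  have hθ0 : 0 ≤ Real.arcsin s := Real.arcsin_nonneg.2 hs0.le
  have hθ2 : Real.arcsin s ≤ Real.pi / 2 := Real.arcsin_le_pi_div_two s
  have hcos : Real.cos (2 * Real.arcsin s) = 1 - 2 * s ^ 2 := by
    rw [Real.cos_two_mul, Real.cos_arcsin, Real.sq_sqrt (by nlinarith)]
    ring
  have hsc : 0 < Real.sinh c := by rwa [Real.sinh_pos_iff]
  have harg : Real.tanh c / Real.tanh (2 * c) = 1 - 2 * s ^ 2 := by
    rw [my_tanh_eq, my_tanh_eq, Real.sinh_two_mul, Real.cosh_two_mul, hs]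
    have h2 : Real.cosh (2 * c) ≠ 0 := ne_of_gt (Real.cosh_pos _)
    field_simp
    linear_combination (-1 : ℝ) * Real.cosh_sq c
  rw [harg, ← hcos, Real.arccos_cos (by linarith) (by linarith)]

lemma my_cont_tanh : Continuous Real.tanh := by
  have : Real.tanh = fun x => Real.sinh x / Real.cosh x := funext my_tanh_eq
  rw [this]
  exact Real.continuous_sinh.div Real.continuous_cosh fun x => ne_of_gt (Real.cosh_pos x)




/-- Theorem maximal sysloops, part (b): if `0 < b₁ ≤ b₂ ≤ b₃` and `f(b₃) ≤ π`, then
there is a unique `x ∈ (b₂, b₃]` with `g(x) = π`, where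
`g(x) = 2·arccos(tanh(b₃/2)/tanh x) + 2·arcsin(sinh(b₃/2)/sinh x)
      + 2·arcsin(cosh(b₁/2)/cosh(x/2)) + 2·arcsin(cosh(b₂/2)/cosh(x/2))`. -/
theorem stmt_7 (b₁ b₂ b₃ : ℝ) (hb₁ : 0 < b₁) (h12 : b₁ ≤ b₂) (h23 : b₂ ≤ b₃)
    (f g : ℝ → ℝ)
    (hf : ∀ x, f x = 6 * Real.arcsin (1 / (2 * Real.cosh (x / 2)))
      + 2 * (Real.arcsin (Real.cosh (b₁ / 2) / Real.cosh (x / 2))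
        + Real.arcsin (Real.cosh (b₂ / 2) / Real.cosh (x / 2))))
    (hg : ∀ x, g x = 2 * Real.arccos (Real.tanh (b₃ / 2) / Real.tanh x)
      + 2 * Real.arcsin (Real.sinh (b₃ / 2) / Real.sinh x)
      + 2 * (Real.arcsin (Real.cosh (b₁ / 2) / Real.cosh (x / 2))
        + Real.arcsin (Real.cosh (b₂ / 2) / Real.cosh (x / 2))))
    (h : f b₃ ≤ Real.pi) :
    ∃! x : ℝ, x ∈ Set.Ioc b₂ b₃ ∧ g x = Real.pi := by
  have hb₂ : 0 < b₂ := lt_of_lt_of_le hb₁ h12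
  have hb₃ : 0 < b₃ := lt_of_lt_of_le hb₂ h23
  have hc : 0 < b₃ / 2 := by positivity
  -- the T-part is weakly decreasing
  have hT_le : ∀ x, 0 < x → ∀ y, x < y →
      Real.arccos (Real.tanh (b₃/2) / Real.tanh y) + Real.arcsin (Real.sinh (b₃/2) / Real.sinh y)
      ≤ Real.arccos (Real.tanh (b₃/2) / Real.tanh x)
        + Real.arcsin (Real.sinh (b₃/2) / Real.sinh x) := by
    intro x hx y hxy
    have hy : 0 < y := lt_trans hx hxy
    rcases le_or_gt y (b₃/2) with hyc | hcy
    · rw [my_Tconst hy hyc, my_Tconst hx (le_of_lt (lt_of_lt_of_le hxy hyc))]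
    · rcases le_or_gt x (b₃/2) with hxc | hcx
      · have h1 := my_TstrictAnti hc (Set.self_mem_Ici) (Set.mem_Ici.2 hcy.le) hcy
        dsimp only at h1
        rw [my_Tconst hc le_rfl] at h1
        rw [my_Tconst hx hxc]
        exact le_of_lt h1
      · exact le_of_lt (my_TstrictAnti hc (Set.mem_Ici.2 hcx.le)
          (Set.mem_Ici.2 (lt_trans hcx hxy).le) hxy)
  -- each arcsin-cosh part is strictly decreasing
  have harcsin_lt : ∀ b : ℝ, 0 < b → b ≤ b₂ → ∀ x y : ℝ, b₂ ≤ x → x < y →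
      Real.arcsin (Real.cosh (b/2) / Real.cosh (y/2))
        < Real.arcsin (Real.cosh (b/2) / Real.cosh (x/2)) := by
    intro b hb hbb x y hx hxy
    have hx0 : 0 < x := lt_of_lt_of_le hb₂ hx
    have hy0 : 0 < y := lt_trans hx0 hxy
    have hb2 : 0 < Real.cosh (b/2) := Real.cosh_pos _
    have hle : Real.cosh (b/2) ≤ Real.cosh (x/2) := by
      rw [Real.cosh_le_cosh, abs_of_pos (by positivity), abs_of_pos (by positivity)]
      linarith
    have hlt : Real.cosh (x/2) < Real.cosh (y/2) := by
      rw [Real.cosh_lt_cosh, abs_of_pos (by positivity), abs_of_pos (by positivity)]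
      linarith
    have hry : Real.cosh (b/2) / Real.cosh (y/2) < Real.cosh (b/2) / Real.cosh (x/2) :=
      div_lt_div_of_pos_left hb2 (Real.cosh_pos _) hlt
    have hrx1 : Real.cosh (b/2) / Real.cosh (x/2) ≤ 1 := (div_le_one (Real.cosh_pos _)).2 hle
    have hry0 : 0 < Real.cosh (b/2) / Real.cosh (y/2) := div_pos hb2 (Real.cosh_pos _)
    exact Real.strictMonoOn_arcsin ⟨by linarith, by linarith⟩
      ⟨by linarith [div_pos hb2 (Real.cosh_pos (x/2))], hrx1⟩ hry
  -- g is strictly decreasing on [b₂, b₃]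
  have hg_anti : StrictAntiOn g (Set.Icc b₂ b₃) := by
    intro x hx y hy hxy
    rw [hg x, hg y]
    have t := hT_le x (lt_of_lt_of_le hb₂ hx.1) y hxy
    have a1 := harcsin_lt b₁ hb₁ h12 x y hx.1 hxy
    have a2 := harcsin_lt b₂ hb₂ le_rfl x y hx.1 hxy
    linarith
  -- g b₃ = f b₃
  have hgb3 : g b₃ = f b₃ := by
    rw [hg, hf]
    have e1 : Real.arccos (Real.tanh (b₃/2) / Real.tanh b₃)
        = 2 * Real.arcsin (1 / (2 * Real.cosh (b₃/2))) := by
      have := my_identity (c := b₃/2) hc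
      rwa [show 2 * (b₃/2) = b₃ by ring] at this
    have e2 : Real.sinh (b₃/2) / Real.sinh b₃ = 1 / (2 * Real.cosh (b₃/2)) := by
      have hs : Real.sinh b₃ = 2 * Real.sinh (b₃/2) * Real.cosh (b₃/2) := by
        rw [← Real.sinh_two_mul]
        congr 1
        ring
      have hsc : Real.sinh (b₃/2) ≠ 0 := ne_of_gt (Real.sinh_pos_iff.2 hc)
      rw [hs]
      field_simp
    rw [e1, e2]
    ring
  -- g b₂ > π
  have hgb2 : Real.pi < g b₂ := by
    rw [hg]
    have t1 : 0 ≤ Real.arccos (Real.tanh (b₃/2) / Real.tanh b₂) := Real.arccos_nonneg _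
    have t2 : 0 ≤ Real.arcsin (Real.sinh (b₃/2) / Real.sinh b₂) :=
      Real.arcsin_nonneg.2 (div_pos (Real.sinh_pos_iff.2 hc) (Real.sinh_pos_iff.2 hb₂)).le
    have h2 : Real.arcsin (Real.cosh (b₂/2) / Real.cosh (b₂/2)) = Real.pi / 2 := by
      rw [div_self (ne_of_gt (Real.cosh_pos _)), Real.arcsin_one]
    have h1 : 0 < Real.arcsin (Real.cosh (b₁/2) / Real.cosh (b₂/2)) :=
      Real.arcsin_pos.2 (div_pos (Real.cosh_pos _) (Real.cosh_pos _))
    rw [h2]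
    linarith
  have hlt23 : b₂ < b₃ := by
    rcases eq_or_lt_of_le h23 with rfl | hlt
    · exfalso; rw [hgb3] at hgb2; linarith
    · exact hlt
  -- continuity of g on [b₂, b₃]
  have hcont : ContinuousOn g (Set.Icc b₂ b₃) := by
    apply ContinuousOn.congr (f := fun x => 2 * Real.arccos (Real.tanh (b₃/2) / Real.tanh x)
      + 2 * Real.arcsin (Real.sinh (b₃/2) / Real.sinh x)
      + 2 * (Real.arcsin (Real.cosh (b₁/2) / Real.cosh (x/2))
        + Real.arcsin (Real.cosh (b₂/2) / Real.cosh (x/2))))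
    · have c1 : ContinuousOn (fun x => Real.arccos (Real.tanh (b₃/2) / Real.tanh x))
          (Set.Icc b₂ b₃) := by
        apply Real.continuous_arccos.comp_continuousOn
        exact ContinuousOn.div continuousOn_const my_cont_tanh.continuousOn
          fun x hx => ne_of_gt (my_tanh_pos (lt_of_lt_of_le hb₂ hx.1))
      have c2 : ContinuousOn (fun x => Real.arcsin (Real.sinh (b₃/2) / Real.sinh x))
          (Set.Icc b₂ b₃) := by
        apply Real.continuous_arcsin.comp_continuousOn
        exact ContinuousOn.div continuousOn_const Real.continuous_sinh.continuousOn
          fun x hx => ne_of_gt (Real.sinh_pos_iff.2 (lt_of_lt_of_le hb₂ hx.1))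
      have c3 : ∀ b : ℝ, Continuous (fun x => Real.arcsin (Real.cosh (b/2) / Real.cosh (x/2))) := by
        intro b
        apply Real.continuous_arcsin.comp
        exact continuous_const.div (Real.continuous_cosh.comp (continuous_id.div_const 2))
          fun x => ne_of_gt (Real.cosh_pos _)
      exact ((continuousOn_const.mul c1).add (continuousOn_const.mul c2)).add
        (continuousOn_const.mul (((c3 b₁).continuousOn).add ((c3 b₂).continuousOn)))
    · exact fun x _ => hg x
  -- intermediate value theorem
  have hmem : Real.pi ∈ Set.Icc (g b₃) (g b₂) := ⟨by rw [hgb3]; exact h, hgb2.le⟩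
  obtain ⟨x, hx, hgx⟩ := intermediate_value_Icc' hlt23.le hcont hmem
  have hxb2 : b₂ < x := by
    rcases eq_or_lt_of_le hx.1 with rfl | hlt
    · exfalso; rw [hgx] at hgb2; exact lt_irrefl _ hgb2
    · exact hlt
  refine ⟨x, ⟨⟨hxb2, hx.2⟩, hgx⟩, ?_⟩
  rintro y ⟨⟨hy1, hy2⟩, hgy⟩
  exact hg_anti.injOn ⟨hy1.le, hy2⟩ ⟨hx.1, hx.2⟩ (hgy.trans hgx.symm)
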